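/- arXiv:2404.11709 — 5 statements merged into one kernel-verified Lean document; each statement's English description precedes it below -/
import Mathlib

section
/- Let d ≥ 1, r, m ≥ 0, and let Q_1, …, Q_m, Q be polynomials in ℂ[x_1, …, x_r] (with commuting variables). Suppose that every assignment of d-th roots of unity to x_1, …, x_r that satisfies Q_1 = ⋯ = Q_m = 0 also satisfies Q = 0. Then for every complex Hilbert space H and every collection A_1, …, A_r of pairwise commuting bounded normal linear operators on H with A_i^d = I for all i (so that evaluation of any polynomial of ℂ[x_1,…,x_r] at A_1, …, A_r is well defined, e.g. inside the commutative subalgebra they generate), if Q_ℓ(A_1, …, A_r) = 0 for all ℓ ∈ [m], then Q(A_1, …, A_r) = 0. -/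
open scoped BigOperators

/-- Evaluation of a multivariate polynomial over `ℂ` at a family of (pairwise commuting)
elements of a `ℂ`-algebra, defined by summing monomials. -/
noncomputable def mvEval {r : ℕ} {A : Type*} [Ring A] [Algebra ℂ A]
    (f : Fin r → A) (Q : MvPolynomial (Fin r) ℂ) : A :=
  ∑ m ∈ Q.support, Q.coeff m • (List.ofFn (fun i => f i ^ (m i))).prod

lemma mvEval_eq_aeval {r : ℕ} {B : Type*} [CommRing B] [Algebra ℂ B]
    (f : Fin r → B) (Q : MvPolynomial (Fin r) ℂ) :
    mvEval f Q = MvPolynomial.aeval f Q := by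
  unfold mvEval
  conv_rhs => rw [Q.as_sum]
  rw [map_sum]
  refine Finset.sum_congr rfl fun m _ => ?_
  rw [MvPolynomial.aeval_monomial, List.prod_ofFn, Algebra.smul_def, Finsupp.prod_pow]

lemma map_mvEval {r : ℕ} {B C : Type*} [Ring B] [Algebra ℂ B] [Ring C] [Algebra ℂ C]
    (φ : B →ₐ[ℂ] C) (f : Fin r → B) (Q : MvPolynomial (Fin r) ℂ) :
    φ (mvEval f Q) = mvEval (fun i => φ (f i)) Q := by
  unfold mvEval
  rw [map_sum]
  refine Finset.sum_congr rfl fun m _ => ?_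
  rw [map_smul, map_list_prod, List.map_ofFn]
  simp [Function.comp_def, map_pow]

lemma key_roots (d r m : ℕ) (hd : 1 ≤ d)
    (Q : Fin m → MvPolynomial (Fin r) ℂ) (Qt : MvPolynomial (Fin r) ℂ)
    (hscalar : ∀ a : Fin r → ℂ, (∀ i, (a i) ^ d = 1) →
      (∀ ℓ, MvPolynomial.eval a (Q ℓ) = 0) → MvPolynomial.eval a Qt = 0)
    {B : Type*} [CommRing B] [Algebra ℂ B]
    (g : Fin r → B) (hg : ∀ i, g i ^ d = 1)
    (hz : ∀ ℓ, MvPolynomial.aeval g (Q ℓ) = 0) :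
    MvPolynomial.aeval g Qt = 0 := by
  classical
  haveI : NeZero d := ⟨by omega⟩
  obtain ⟨ζ, hζ⟩ : ∃ ζ : ℂ, IsPrimitiveRoot ζ d :=
    ⟨_, Complex.isPrimitiveRoot_exp d (by omega)⟩
  have hζd : ζ ^ d = 1 := hζ.pow_eq_one
  -- powers of ζ only depend on exponent mod d
  have hpowmod : ∀ a b : ℕ, a % d = b % d → ζ ^ a = ζ ^ b := by
    intro a b hab
    have h1 : ζ ^ a = ζ ^ (a % d) := by
      conv_lhs => rw [← Nat.div_add_mod a d]
      rw [pow_add, pow_mul, hζd, one_pow, one_mul]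
    have h2 : ζ ^ b = ζ ^ (b % d) := by
      conv_lhs => rw [← Nat.div_add_mod b d]
      rw [pow_add, pow_mul, hζd, one_pow, one_mul]
    rw [h1, h2, hab]
  set χ : ZMod d → ℂ := fun t => ζ ^ t.val with hχdef
  have hχ_add : ∀ s t : ZMod d, χ (s + t) = χ s * χ t := by
    intro s t
    simp only [hχdef, ← pow_add]
    exact hpowmod _ _ (by rw [ZMod.val_add]; exact Nat.mod_mod_of_dvd _ dvd_rfl)
  have hχ_zero : χ 0 = 1 := by simp [hχdef, ZMod.val_zero]
  have hχ_powd : ∀ t, χ t ^ d = 1 := by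
    intro t
    simp only [hχdef]
    rw [← pow_mul, mul_comm, pow_mul, hζd, one_pow]
  -- orthogonality
  have horth : ∀ s : ZMod d, ∑ t : ZMod d, χ (t * s) = if s = 0 then (d : ℂ) else 0 := by
    intro s
    have hterm : ∀ t : ZMod d, χ (t * s) = (χ s) ^ t.val := by
      intro t
      simp only [hχdef, ← pow_mul]
      refine hpowmod _ _ ?_
      rw [ZMod.val_mul, Nat.mod_mod_of_dvd _ dvd_rfl, Nat.mul_comm]
    simp only [hterm]
    have hsum : ∑ t : ZMod d, (χ s) ^ t.val = ∑ k ∈ Finset.range d, (χ s) ^ k := by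
      refine Finset.sum_nbij' (fun t => t.val) (fun k => (k : ZMod d)) ?_ ?_ ?_ ?_ ?_
      · intro t _; exact Finset.mem_range.mpr (ZMod.val_lt t)
      · intro k _; exact Finset.mem_univ _
      · intro t _; simp [ZMod.natCast_val, ZMod.cast_id]
      · intro k hk; exact ZMod.val_natCast_of_lt (Finset.mem_range.mp hk)
      · intro t _; rfl
    rw [hsum]
    by_cases hs : s = 0
    · simp [hs, hχ_zero]
    · rw [if_neg hs]
      have hχs1 : χ s ≠ 1 := by
        simp only [hχdef]
        have h1 : 0 < s.val :=
          Nat.pos_of_ne_zero fun h => hs ((ZMod.val_eq_zero s).mp h)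
        exact hζ.pow_ne_one_of_pos_of_lt h1.ne' (ZMod.val_lt s)
      rw [geom_sum_eq hχs1 d, hχ_powd s, sub_self, zero_div]
  -- the projections
  set pr : Fin r → ZMod d → B := fun i t =>
    (d : ℂ)⁻¹ • ∑ k ∈ Finset.range d, χ (-(t * (k : ZMod d))) • g i ^ k with hprdef
  set E : (Fin r → ZMod d) → B := fun v => ∏ i, pr i (v i) with hEdef
  have hdC : (d : ℂ) ≠ 0 := by
    exact Nat.cast_ne_zero.mpr (by omega : d ≠ 0)
  -- g i * pr i t = χ t • pr i t
  have hshift : ∀ (n : ℕ) (F : ℕ → B), F n = F 0 →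
      ∑ k ∈ Finset.range n, F (k + 1) = ∑ k ∈ Finset.range n, F k := by
    intro n F h
    cases n with
    | zero => simp
    | succ n =>
      rw [Finset.sum_range_succ (fun k => F (k + 1)), Finset.sum_range_succ' F]
      rw [h]
  have hgpr : ∀ i t, g i * pr i t = χ t • pr i t := by
    intro i t
    set F : ℕ → B := fun j => χ (-(t * ((j : ZMod d) - 1))) • g i ^ j with hFdef
    have h1 : g i * pr i t = (d : ℂ)⁻¹ • ∑ k ∈ Finset.range d, F (k + 1) := by
      rw [hprdef, mul_smul_comm, Finset.mul_sum]
      simp only [hFdef]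
      congr 1
      refine Finset.sum_congr rfl fun k _ => ?_
      rw [mul_smul_comm, ← pow_succ']
      congr 2
      push_cast
      ring
    have h2 : χ t • pr i t = (d : ℂ)⁻¹ • ∑ k ∈ Finset.range d, F k := by
      rw [hprdef, smul_comm]
      congr 1
      rw [Finset.smul_sum]
      refine Finset.sum_congr rfl fun k _ => ?_
      rw [smul_smul, hFdef]
      congr 1
      rw [← hχ_add]
      congr 1
      ring
    rw [h1, h2, hshift d F]
    simp only [hFdef]
    have hd0 : ((d : ZMod d) : ZMod d) = 0 := by
      simp [ZMod.natCast_self]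
    rw [hd0]
    norm_num [hg i]
  -- sum of projections is 1
  have hsum_pr : ∀ i, ∑ t : ZMod d, pr i t = 1 := by
    intro i
    simp only [hprdef, ← Finset.smul_sum]
    rw [Finset.sum_comm]
    have : ∀ k ∈ Finset.range d,
        ∑ t : ZMod d, χ (-(t * (k : ZMod d))) • g i ^ k
          = ((if -(k : ZMod d) = 0 then (d : ℂ) else 0)) • g i ^ k := by
      intro k _
      rw [← Finset.sum_smul, ← horth (-(k : ZMod d))]
      congr 1
      refine Finset.sum_congr rfl fun t _ => ?_
      congr 1
      ring
    rw [Finset.sum_congr rfl this]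
    rw [Finset.sum_eq_single 0]
    · simp [hdC]
    · intro k hk hk0
      have : ¬ (-(k : ZMod d) = 0) := by
        simp only [neg_eq_zero]
        intro h
        exact hk0 ((Nat.eq_zero_of_dvd_of_lt ((ZMod.natCast_eq_zero_iff k d).mp h)
          (Finset.mem_range.mp hk)).symm ▸ rfl)
      simp [this]
    · intro h
      exact absurd (Finset.mem_range.mpr (by omega)) h
  have hsum_E : ∑ v : Fin r → ZMod d, E v = 1 := by
    simp only [hEdef]
    rw [← Fintype.prod_sum (fun i t => pr i t)]
    simp [hsum_pr]
  -- g i * E v = χ (v i) • E v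
  have hgE : ∀ i (v : Fin r → ZMod d), g i * E v = χ (v i) • E v := by
    intro i v
    simp only [hEdef]
    rw [Finset.prod_eq_mul_prod_sdiff_singleton_of_mem (Finset.mem_univ i) (fun j => pr j (v j))]
    rw [← mul_assoc, hgpr i (v i), smul_mul_assoc]
  -- main claim: evaluation against projections
  have hmain : ∀ (P : MvPolynomial (Fin r) ℂ) (v : Fin r → ZMod d),
      MvPolynomial.aeval g P * E v = (MvPolynomial.eval (fun i => χ (v i)) P) • E v := by
    intro P v
    induction P using MvPolynomial.induction_on with
    | C c => simp [Algebra.smul_def]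
    | add p q hp hq => rw [map_add, map_add, add_mul, hp, hq, add_smul]
    | mul_X p i hp =>
      rw [map_mul, MvPolynomial.aeval_X, mul_assoc, hgE i v, mul_smul_comm, hp,
        smul_smul, map_mul, MvPolynomial.eval_X, mul_comm]
  -- conclusion
  have : MvPolynomial.aeval g Qt = ∑ v : Fin r → ZMod d,
      (MvPolynomial.eval (fun i => χ (v i)) Qt) • E v := by
    conv_lhs => rw [← mul_one (MvPolynomial.aeval g Qt), ← hsum_E]
    rw [Finset.mul_sum]
    exact Finset.sum_congr rfl fun v _ => hmain Qt v
  rw [this]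
  refine Finset.sum_eq_zero fun v _ => ?_
  by_cases hv : ∀ ℓ, MvPolynomial.eval (fun i => χ (v i)) (Q ℓ) = 0
  · rw [hscalar _ (fun i => hχ_powd (v i)) hv, zero_smul]
  · push_neg at hv
    obtain ⟨ℓ, hℓ⟩ := hv
    have h0 : (MvPolynomial.eval (fun i => χ (v i)) (Q ℓ)) • E v = 0 := by
      rw [← hmain, hz ℓ, zero_mul]
    rcases smul_eq_zero.mp h0 with h | h
    · exact absurd h hℓ
    · rw [h, smul_zero]

set_option synthInstance.maxHeartbeats 1000000 in
set_option maxHeartbeats 1000000 in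
theorem stmt1 (d r m : ℕ) (hd : 1 ≤ d)
    (Q : Fin m → MvPolynomial (Fin r) ℂ) (Qt : MvPolynomial (Fin r) ℂ)
    (hscalar : ∀ a : Fin r → ℂ, (∀ i, (a i) ^ d = 1) →
      (∀ ℓ, MvPolynomial.eval a (Q ℓ) = 0) → MvPolynomial.eval a Qt = 0)
    {H : Type*} [NormedAddCommGroup H] [InnerProductSpace ℂ H] [CompleteSpace H]
    (A : Fin r → (H →L[ℂ] H))
    (hcomm : ∀ i j, A i * A j = A j * A i)
    (hnormal : ∀ i, A i * star (A i) = star (A i) * A i)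
    (horder : ∀ i, A i ^ d = 1)
    (hzero : ∀ ℓ, mvEval A (Q ℓ) = 0) :
    mvEval A Qt = 0 := by
  classical
  have hcomm' : ∀ a ∈ Set.range A, ∀ b ∈ Set.range A, a * b = b * a := by
    rintro _ ⟨i, rfl⟩ _ ⟨j, rfl⟩
    exact hcomm i j
  set B := Algebra.adjoin ℂ (Set.range A) with hB
  letI : CommRing B := Algebra.adjoinCommRingOfComm ℂ hcomm'
  set g : Fin r → B := fun i => ⟨A i, Algebra.subset_adjoin ⟨i, rfl⟩⟩ with hgdef
  have hval : ∀ P : MvPolynomial (Fin r) ℂ,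
      (B.val (MvPolynomial.aeval g P) : H →L[ℂ] H) = mvEval A P := by
    intro P
    rw [← mvEval_eq_aeval, map_mvEval]
    rfl
  have hg : ∀ i, g i ^ d = 1 := by
    intro i
    apply Subtype.ext
    show (A i : H →L[ℂ] H) ^ d = 1
    exact horder i
  have hz : ∀ ℓ, MvPolynomial.aeval g (Q ℓ) = 0 := by
    intro ℓ
    apply Subtype.val_injective
    show (B.val (MvPolynomial.aeval g (Q ℓ)) : H →L[ℂ] H) = 0
    rw [hval]
    exact hzero ℓ
  have := key_roots d r m hd Q Qt hscalar g hg hz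
  rw [← hval Qt, this, map_zero]
end

section
/- Let A be an associative unital algebra over ℂ, let d ≥ 1 and ℓ ≥ 1, let b_1, …, b_ℓ ∈ A satisfy b_i^d = 1 for all i, and let S_1, …, S_ℓ ⊆ {0, 1, …, d−1}. Suppose that for every i ∈ {1, …, ℓ−1} one has (∏_{k∈{0,…,d−1}∖S_i}(λ_k·1 − b_i)) · (∏_{k∈S_{i+1}}(λ_k·1 − b_{i+1})) = 0. Then (∏_{k∈{0,…,d−1}∖S_1}(λ_k·1 − b_1)) · (∏_{k∈S_ℓ}(λ_k·1 − b_ℓ)) = 0. -/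
open scoped BigOperators

/-- `lam d k = exp(2πik/d)`, the `k`-th `d`-th root of unity. -/
noncomputable def lam (d : ℕ) (k : Fin d) : ℂ :=
  Complex.exp (2 * Real.pi * Complex.I * (k : ℕ) / d)

/-- The product of the (pairwise commuting) elements `f k`, `k ∈ T`, taken in increasing
order of the index `k`.  (Since the factors commute, the order is immaterial.) -/
def ordProd {d : ℕ} {A : Type*} [Monoid A] (T : Finset (Fin d)) (f : Fin d → A) : A :=
  ((T.sort (· ≤ ·)).map f).prod

open Polynomial in
lemma lam_eq_pow (d : ℕ) (hd : d ≠ 0) (k : Fin d) :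
    lam d k = Complex.exp (2 * Real.pi * Complex.I / d) ^ (k : ℕ) := by
  rw [← Complex.exp_nat_mul, lam]
  ring_nf

lemma lam_injective (d : ℕ) (hd : 1 ≤ d) : Function.Injective (lam d) := by
  intro i j hij
  have hprim := Complex.isPrimitiveRoot_exp d (by omega)
  rw [lam_eq_pow d (by omega), lam_eq_pow d (by omega)] at hij
  exact Fin.ext (hprim.pow_inj i.isLt j.isLt hij)

open Polynomial in
lemma ordProd_eq_aeval {d : ℕ} {A : Type*} [Ring A] [Algebra ℂ A] (T : Finset (Fin d))
    (b : A) :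
    ordProd T (fun k => lam d k • (1 : A) - b) =
      Polynomial.aeval b (∏ k ∈ T, (C (lam d k) - X)) := by
  have h1 : ∏ k ∈ T, (C (lam d k) - X) =
      ((T.sort (· ≤ ·)).map (fun k => C (lam d k) - X)).prod := by
    rw [Finset.prod_eq_multiset_prod, ← Finset.sort_eq T (· ≤ ·), Multiset.map_coe,
      Multiset.prod_coe]
  rw [h1, ordProd, map_list_prod, List.map_map]
  congr 1
  ext k
  simp [Algebra.algebraMap_eq_smul_one]

open Polynomial in
theorem stmt4 {A : Type*} [Ring A] [Algebra ℂ A] (d l : ℕ) (hd : 1 ≤ d) (hl : 1 ≤ l)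
    (b : Fin l → A) (hb : ∀ i, b i ^ d = 1) (S : Fin l → Finset (Fin d))
    (hchain : ∀ i : ℕ, (hi : i + 1 < l) →
      ordProd (S ⟨i, by omega⟩)ᶜ (fun k => lam d k • (1 : A) - b ⟨i, by omega⟩) *
        ordProd (S ⟨i + 1, hi⟩) (fun k => lam d k • (1 : A) - b ⟨i + 1, hi⟩) = 0) :
    ordProd (S ⟨0, by omega⟩)ᶜ (fun k => lam d k • (1 : A) - b ⟨0, by omega⟩) *
      ordProd (S ⟨l - 1, by omega⟩) (fun k => lam d k • (1 : A) - b ⟨l - 1, by omega⟩) = 0 := by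
  classical
  -- polynomials
  set P : Fin l → ℂ[X] := fun i => ∏ k ∈ (S i)ᶜ, (C (lam d k) - X) with hP
  set Q : Fin l → ℂ[X] := fun i => ∏ k ∈ S i, (C (lam d k) - X) with hQ
  -- full product is zero when evaluated at b i
  have hfull : ∀ i : Fin l, aeval (b i) (Q i * P i) = 0 := by
    intro i
    have hζ := Complex.isPrimitiveRoot_exp d (by omega)
    have hprod : ∏ k : Fin d, (X - C (lam d k)) = X ^ d - C (1 : ℂ) := by
      rw [X_pow_sub_C_eq_prod hζ (by omega) (one_pow d), ← Fin.prod_univ_eq_prod_range]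
      refine Finset.prod_congr rfl fun k _ => ?_
      rw [lam_eq_pow d (by omega), mul_one]
    have h2 : Q i * P i = (-1) ^ d * (X ^ d - C 1) := by
      calc Q i * P i = ∏ k : Fin d, (C (lam d k) - X) := Finset.prod_mul_prod_compl _ _
        _ = ∏ k : Fin d, (-1 : ℂ[X]) * (X - C (lam d k)) :=
            Finset.prod_congr rfl fun k _ => by ring
        _ = (-1) ^ d * ∏ k : Fin d, (X - C (lam d k)) := by
            rw [Finset.prod_mul_distrib, Finset.prod_const, Finset.card_univ, Fintype.card_fin]
        _ = (-1) ^ d * (X ^ d - C 1) := by rw [hprod]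
    rw [h2]
    simp [hb i]
  -- coprimality
  have hcop : ∀ i : Fin l, IsCoprime (Q i) (P i) := by
    intro i
    apply IsCoprime.prod_left
    intro k hk
    apply IsCoprime.prod_right
    intro j hj
    have hkj : k ≠ j := by
      intro h; subst h
      exact (Finset.mem_compl.mp hj) hk
    have : IsCoprime (X - C (lam d k)) (X - C (lam d j)) :=
      Polynomial.pairwise_coprime_X_sub_C (lam_injective d hd) hkj
    simpa using (this.neg_left.neg_right)
  -- main induction
  have key : ∀ n : ℕ, (hn : n < l) →
      aeval (b ⟨0, by omega⟩) (P ⟨0, by omega⟩) * aeval (b ⟨n, hn⟩) (Q ⟨n, hn⟩) = 0 := by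
    intro n
    induction n with
    | zero =>
      intro hn
      have := hfull ⟨0, hn⟩
      rw [map_mul] at this
      calc aeval (b ⟨0, by omega⟩) (P ⟨0, by omega⟩) * aeval (b ⟨0, hn⟩) (Q ⟨0, hn⟩)
          = aeval (b ⟨0, hn⟩) (P ⟨0, hn⟩ * Q ⟨0, hn⟩) := by rw [map_mul]
        _ = aeval (b ⟨0, hn⟩) (Q ⟨0, hn⟩ * P ⟨0, hn⟩) := by rw [mul_comm]
        _ = 0 := hfull ⟨0, hn⟩
    | succ n ih =>
      intro hn
      have hn' : n < l := by omega
      have ihn := ih hn'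
      have hch := hchain n hn
      rw [ordProd_eq_aeval, ordProd_eq_aeval] at hch
      obtain ⟨u, v, huv⟩ := hcop ⟨n, hn'⟩
      -- abbreviations
      set x := aeval (b ⟨0, by omega⟩) (P ⟨0, by omega⟩)
      set y := aeval (b ⟨n + 1, hn⟩) (Q ⟨n + 1, hn⟩)
      set qn := aeval (b ⟨n, hn'⟩) (Q ⟨n, hn'⟩)
      set pn := aeval (b ⟨n, hn'⟩) (P ⟨n, hn'⟩)
      set U := aeval (b ⟨n, hn'⟩) u
      set V := aeval (b ⟨n, hn'⟩) v
      have h1 : U * qn + V * pn = 1 := by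
        have := congrArg (aeval (b ⟨n, hn'⟩)) huv
        simpa only [map_add, map_mul, map_one] using this
      have h2 : U * qn = qn * U := by
        simp only [U, qn, ← map_mul, mul_comm]
      have hpy : pn * y = 0 := hch
      calc x * y = x * (U * qn + V * pn) * y := by rw [h1, mul_one]
        _ = x * qn * (U * y) + x * (V * (pn * y)) := by rw [h2]; noncomm_ring
        _ = 0 := by rw [ihn, hpy]; simp
  have hgoal := key (l - 1) (by omega)
  rw [ordProd_eq_aeval, ordProd_eq_aeval]
  exact hgoal
end

section
/- Let e ≤ d be positive integers. Let p ∈ ℂ[x] be a polynomial whose restriction to U_e is an injective map into U_d, let B = {p(λ) : λ^e = 1} ⊆ U_d, let ρ ∈ ℂ[x] be a polynomial with ρ(μ) = 1 for μ ∈ B and ρ(μ) = 0 for μ ∈ U_d ∖ B, and let q ∈ ℂ[x] be a polynomial with q(p(λ)) = λ for every λ with λ^e = 1. Let C_1, …, C_k be pairwise commuting normal complex n×n matrices with C_i^d = I and ρ(C_i) = I for all i. Then every eigenvalue of each C_i belongs to B; the matrices A_i = q(C_i), i ∈ [k], are pairwise commuting normal matrices satisfying A_i^e = I; and p(A_i)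 = C_i for all i. -/
open Polynomial

lemma commute_aeval_right {A : Type*} [Ring A] [Algebra ℂ A] {a b : A}
    (h : Commute a b) (f : ℂ[X]) : Commute a (aeval b f) := by
  induction f using Polynomial.induction_on' with
  | add p q hp hq => simpa [map_add] using hp.add_right hq
  | monomial n c =>
      rw [aeval_monomial]
      exact ((Algebra.commute_algebraMap_left c a).symm).mul_right (h.pow_right n)

lemma commute_aeval {A : Type*} [Ring A] [Algebra ℂ A] {a b : A}
    (h : Commute a b) (f g : ℂ[X]) : Commute (aeval a f) (aeval b g) :=
  commute_aeval_right (commute_aeval_right h.symm f).symm g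

lemma star_aeval {n : ℕ} (a : Matrix (Fin n) (Fin n) ℂ) (f : ℂ[X]) :
    star (aeval a f) = aeval (star a) (f.map (starRingEnd ℂ)) := by
  induction f using Polynomial.induction_on' with
  | add p q hp hq => simp [map_add, hp, hq]
  | monomial m c =>
      rw [aeval_monomial, Polynomial.map_monomial, aeval_monomial, star_mul, star_pow]
      have h1 : star ((algebraMap ℂ (Matrix (Fin n) (Fin n) ℂ)) c)
          = algebraMap ℂ (Matrix (Fin n) (Fin n) ℂ) (starRingEnd ℂ c) := by
        rw [Algebra.algebraMap_eq_smul_one, Algebra.algebraMap_eq_smul_one, star_smul, star_one]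
        rfl
      rw [h1]
      exact ((Algebra.commute_algebraMap_left _ (star a ^ m)).symm).eq

theorem stmt8 (e d : ℕ) (he : 1 ≤ e) (hed : e ≤ d)
    (p : Polynomial ℂ)
    (hmap : ∀ l : ℂ, l ^ e = 1 → (p.eval l) ^ d = 1)
    (hinj : ∀ l l' : ℂ, l ^ e = 1 → l' ^ e = 1 → p.eval l = p.eval l' → l = l')
    (ρ : Polynomial ℂ)
    (hρ1 : ∀ μ : ℂ, (∃ l : ℂ, l ^ e = 1 ∧ p.eval l = μ) → ρ.eval μ = 1)
    (hρ0 : ∀ μ : ℂ, μ ^ d = 1 → ¬ (∃ l : ℂ, l ^ e = 1 ∧ p.eval l = μ) → ρ.eval μ = 0)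
    (q : Polynomial ℂ)
    (hq : ∀ l : ℂ, l ^ e = 1 → q.eval (p.eval l) = l)
    (k n : ℕ) (C : Fin k → Matrix (Fin n) (Fin n) ℂ)
    (hcomm : ∀ i j, C i * C j = C j * C i)
    (hnormal : ∀ i, C i * star (C i) = star (C i) * C i)
    (horder : ∀ i, C i ^ d = 1)
    (hρC : ∀ i, Polynomial.aeval (C i) ρ = 1) :
    (∀ i, ∀ μ ∈ spectrum ℂ (C i), ∃ l : ℂ, l ^ e = 1 ∧ p.eval l = μ) ∧
    (∀ i j, Polynomial.aeval (C i) q * Polynomial.aeval (C j) q =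
        Polynomial.aeval (C j) q * Polynomial.aeval (C i) q) ∧
    (∀ i, Polynomial.aeval (C i) q * star (Polynomial.aeval (C i) q) =
        star (Polynomial.aeval (C i) q) * Polynomial.aeval (C i) q) ∧
    (∀ i, Polynomial.aeval (C i) q ^ e = 1) ∧
    (∀ i, Polynomial.aeval (Polynomial.aeval (C i) q) p = C i) := by
  have hd : 0 < d := le_trans he hed
  have key : ∀ (f : ℂ[X]), (∀ l : ℂ, l ^ e = 1 → f.eval (p.eval l) = 0) →
      ∀ i, aeval (C i) f = 0 := by
    intro f hf i
    have hvan : ∀ ζ : ℂ, ζ ^ d = 1 → (f * ρ).eval ζ = 0 := by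
      intro ζ hζ
      by_cases hb : ∃ l : ℂ, l ^ e = 1 ∧ p.eval l = ζ
      · obtain ⟨l, hl, rfl⟩ := hb
        simp [hf l hl]
      · simp [hρ0 ζ hζ hb]
    have hdvd : (X ^ d - 1 : ℂ[X]) ∣ f * ρ := by
      obtain ⟨ζ₀, hζ₀⟩ : ∃ ζ₀ : ℂ, IsPrimitiveRoot ζ₀ d :=
        ⟨_, Complex.isPrimitiveRoot_exp d hd.ne'⟩
      rw [X_pow_sub_one_eq_prod hd hζ₀]
      apply Finset.prod_dvd_of_coprime (s := fun ζ : ℂ => X - Polynomial.C ζ)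
      · intro x _ y _ hxy
        exact isCoprime_X_sub_C_of_isUnit_sub (sub_ne_zero_of_ne hxy).isUnit
      · intro ζ hζ
        rw [dvd_iff_isRoot]
        exact hvan ζ ((mem_nthRootsFinset hd 1).mp hζ)
    obtain ⟨g, hg⟩ := hdvd
    have h0 : aeval (C i) (f * ρ) = 0 := by
      rw [hg, map_mul, map_sub, map_pow, aeval_X, map_one, horder i, sub_self, zero_mul]
    rw [map_mul, hρC i, mul_one] at h0
    exact h0
  have hspec : ∀ i, ∀ μ ∈ spectrum ℂ (C i), ∃ l : ℂ, l ^ e = 1 ∧ p.eval l = μ := by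
    intro i μ hμ
    by_contra hb
    have hμd : μ ^ d = 1 := by
      have h1 : (X ^ d - 1 : ℂ[X]).eval μ ∈ spectrum ℂ (aeval (C i) (X ^ d - 1 : ℂ[X])) :=
        spectrum.subset_polynomial_aeval (C i) (X ^ d - 1) ⟨μ, hμ, rfl⟩
      have h2 : aeval (C i) (X ^ d - 1 : ℂ[X]) = 0 := by
        rw [map_sub, map_pow, aeval_X, map_one, horder i, sub_self]
      rw [h2, spectrum.mem_iff, sub_zero] at h1
      by_contra hne
      apply h1
      have : (X ^ d - 1 : ℂ[X]).eval μ ≠ 0 := by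
        simpa [sub_eq_zero] using hne
      exact (isUnit_iff_ne_zero.mpr this).map (algebraMap ℂ (Matrix (Fin n) (Fin n) ℂ))
    have hρμ : ρ.eval μ = 0 := hρ0 μ hμd hb
    have h1 : ρ.eval μ ∈ spectrum ℂ (aeval (C i) ρ) :=
      spectrum.subset_polynomial_aeval (C i) ρ ⟨μ, hμ, rfl⟩
    rw [hρC i, hρμ, spectrum.mem_iff, map_zero, zero_sub] at h1
    exact h1 isUnit_one.neg
  refine ⟨hspec, ?_, ?_, ?_, ?_⟩
  · intro i j
    exact (commute_aeval (hcomm i j) q q).eq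
  · intro i
    rw [star_aeval]
    exact (commute_aeval (hnormal i) q (q.map (starRingEnd ℂ))).eq
  · intro i
    have := key (q ^ e - 1) (fun l hl => by
      simp [hq l hl, hl]) i
    rw [map_sub, map_pow, map_one, sub_eq_zero] at this
    exact this
  · intro i
    have := key (p.comp q - X) (fun l hl => by
      simp [hq l hl]) i
    rw [map_sub, aeval_comp, aeval_X, sub_eq_zero] at this
    exact this
end

section
/- Let e ≤ d be positive integers. Let p ∈ ℂ[x] be a polynomial whose restriction to U_e is an injective map into U_d, let B = {p(λ) : λ^e = 1} ⊆ U_d, and let ρ ∈ ℂ[x] be a polynomial with ρ(μ) = 1 for μ ∈ B and ρ(μ) = 0 for μ ∈ U_d ∖ B. Let H be a complex Hilbert space and let A_1, …, A_k be pairwise commuting bounded normal linear operators on H with A_i^e = I for all i. Then the operators C_i = p(A_i), i ∈ [k], are pairwise commuting bounded normal operators on H satisfying C_i^d = I and ρ(C_i) = I for all i. -/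
open Polynomial

lemma commAeval {R A : Type*} [CommSemiring R] [Semiring A] [Algebra R A]
    {a b : A} (h : Commute a b) (q : R[X]) : Commute (aeval a q) b := by
  induction q using Polynomial.induction_on' with
  | add r s hr hs => simpa [map_add] using hr.add_left hs
  | monomial n r =>
      rw [aeval_monomial]
      exact ((Algebra.commute_algebraMap_left r b).mul_left (h.pow_left n))

lemma starAeval {A : Type*} [Semiring A] [Algebra ℂ A] [StarRing A] [StarModule ℂ A]
    (a : A) (q : ℂ[X]) :
    star (aeval a q) = aeval (star a) (q.map (starRingEnd ℂ)) := by
  induction q using Polynomial.induction_on' with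
  | add r s hr hs => simp [map_add, hr, hs]
  | monomial n r =>
      simp [aeval_monomial, star_mul, Algebra.algebraMap_eq_smul_one, star_smul,
        star_pow, Algebra.smul_mul_assoc, Algebra.mul_smul_comm, mul_comm]

lemma dvdOfRoots (e : ℕ) (he : 1 ≤ e) (f : ℂ[X])
    (hf : ∀ l : ℂ, l ^ e = 1 → f.eval l = 0) : (X ^ e - 1 : ℂ[X]) ∣ f := by
  by_cases hf0 : f = 0
  · simp [hf0]
  set g : ℂ[X] := X ^ e - 1 with hg
  have hgm : g.Monic := by
    simpa [hg] using monic_X_pow_sub_C (1 : ℂ) (by omega : e ≠ 0)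
  have hsep : g.Separable := by
    rw [hg]
    exact (Polynomial.X_pow_sub_one_separable_iff).mpr (by
      exact_mod_cast Nat.cast_ne_zero.mpr (by omega))
  have hnodup : g.roots.Nodup := nodup_roots hsep
  have hle : g.roots ≤ f.roots := by
    rw [Multiset.le_iff_subset hnodup]
    intro r hr
    have hr' := (mem_roots (hgm.ne_zero)).mp hr
    have hre : r ^ e = 1 := by
      have := hr'
      simp only [hg, IsRoot, eval_sub, eval_pow, eval_X, eval_one, sub_eq_zero] at this
      exact this
    exact (mem_roots hf0).mpr (hf r hre)
  have hgsplit : g = (g.roots.map fun a => X - C a).prod :=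
    (IsAlgClosed.splits g).eq_prod_roots_of_monic hgm
  calc g = (g.roots.map fun a => X - C a).prod := hgsplit
    _ ∣ (f.roots.map fun a => X - C a).prod :=
        Multiset.prod_dvd_prod_of_le (Multiset.map_le_map hle)
    _ ∣ f := prod_multiset_X_sub_C_dvd f

theorem stmt9 (e d : ℕ) (he : 1 ≤ e) (hed : e ≤ d)
    (p : Polynomial ℂ)
    (hmap : ∀ l : ℂ, l ^ e = 1 → (p.eval l) ^ d = 1)
    (hinj : ∀ l l' : ℂ, l ^ e = 1 → l' ^ e = 1 → p.eval l = p.eval l' → l = l')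
    (ρ : Polynomial ℂ)
    (hρ1 : ∀ μ : ℂ, (∃ l : ℂ, l ^ e = 1 ∧ p.eval l = μ) → ρ.eval μ = 1)
    (hρ0 : ∀ μ : ℂ, μ ^ d = 1 → ¬ (∃ l : ℂ, l ^ e = 1 ∧ p.eval l = μ) → ρ.eval μ = 0)
    {H : Type*} [NormedAddCommGroup H] [InnerProductSpace ℂ H] [CompleteSpace H]
    (k : ℕ) (A : Fin k → (H →L[ℂ] H))
    (hcomm : ∀ i j, A i * A j = A j * A i)
    (hnormal : ∀ i, A i * star (A i) = star (A i) * A i)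
    (horder : ∀ i, A i ^ e = 1) :
    (∀ i j, Polynomial.aeval (A i) p * Polynomial.aeval (A j) p =
        Polynomial.aeval (A j) p * Polynomial.aeval (A i) p) ∧
    (∀ i, Polynomial.aeval (A i) p * star (Polynomial.aeval (A i) p) =
        star (Polynomial.aeval (A i) p) * Polynomial.aeval (A i) p) ∧
    (∀ i, Polynomial.aeval (A i) p ^ d = 1) ∧
    (∀ i, Polynomial.aeval (Polynomial.aeval (A i) p) ρ = 1) := by
  have hzero : ∀ (i : Fin k) (f : ℂ[X]),
      (∀ l : ℂ, l ^ e = 1 → f.eval l = 0) → aeval (A i) f = 0 := by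
    intro i f hf
    obtain ⟨q, hq⟩ := dvdOfRoots e he f hf
    have hg : aeval (A i) (X ^ e - 1 : ℂ[X]) = 0 := by
      simp [map_sub, map_pow, horder i]
    rw [hq, map_mul, hg, zero_mul]
  refine ⟨?_, ?_, ?_, ?_⟩
  · intro i j
    have h1 : Commute (aeval (A i) p) (A j) := commAeval (hcomm i j) p
    exact (commAeval h1.symm p).symm
  · intro i
    rw [starAeval]
    exact (commAeval (commAeval (hnormal i) p).symm _).symm
  · intro i
    have h := hzero i (p ^ d - 1) (by
      intro l hl
      simp [eval_sub, eval_pow, hmap l hl])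
    rw [map_sub, map_pow, map_one, sub_eq_zero] at h
    exact h
  · intro i
    have h := hzero i (ρ.comp p - 1) (by
      intro l hl
      simp [eval_sub, eval_comp, hρ1 (p.eval l) ⟨l, hl, rfl⟩])
    rw [map_sub, aeval_comp, map_one, sub_eq_zero] at h
    exact h
end

section
/- Let d ≥ 1 and r, s, m ≥ 0. For each i ∈ [m] let R_i ⊆ U_d^{r_i} be a relation and let z_i : [r_i] → [r + s] be a choice of coordinates, and let R ⊆ U_d^r be the relation defined by: (a_1, …, a_r) ∈ R if and only if there exist b_1, …, b_s ∈ U_d such that for every i ∈ [m] the tuple (c_{z_i(1)}, …, c_{z_i(r_i)}) belongs to R_i, where (c_1, …, c_{r+s}) = (a_1, …, a_r, b_1, …, b_s). For each relation Q ⊆ U_d^t fix a polynomial P_Q ∈ ℂ[x_1,…,x_t] representing Q. Let H be a complex Hilbert space and let C_1, …, C_{r+s} be bounded normal linear operators on H with C_j^d = I for all j, such that all of C_1, …, C_{r+s} pairwise commute and for every i ∈ [m] one has P_{R_i}(C_{z_i(1)}, …, C_{z_i(r_i)}) = I. Then P_R(C_1, …, C_r) = I. -/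
open scoped BigOperators

lemma mvEval_map {r : ℕ} {A B F : Type*} [Ring A] [Algebra ℂ A] [Ring B] [Algebra ℂ B]
    [FunLike F A B] [AlgHomClass F ℂ A B] (ψ : F) (f : Fin r → A)
    (Q : MvPolynomial (Fin r) ℂ) :
    ψ (mvEval f Q) = mvEval (fun i => ψ (f i)) Q := by
  unfold mvEval
  rw [map_sum]
  refine Finset.sum_congr rfl fun mo _ => ?_
  rw [map_smul, map_list_prod, List.map_ofFn]
  simp [Function.comp_def, map_pow]

lemma mvEval_eq_eval {r : ℕ} (f : Fin r → ℂ) (Q : MvPolynomial (Fin r) ℂ) :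
    mvEval f Q = MvPolynomial.eval f Q := by
  rw [MvPolynomial.eval_eq']
  unfold mvEval
  refine Finset.sum_congr rfl fun mo _ => ?_
  rw [smul_eq_mul, List.prod_ofFn]

lemma spectrum_one_subset {A : Type*} [Ring A] [Algebra ℂ A] :
    spectrum ℂ (1 : A) ⊆ {1} := by
  intro z hz
  by_contra hne
  rw [spectrum.mem_iff] at hz
  apply hz
  have : algebraMap ℂ A z - 1 = algebraMap ℂ A (z - 1) := by
    simp [map_sub]
  rw [this]
  exact (isUnit_iff_ne_zero.mpr (sub_ne_zero.mpr hne)).map (algebraMap ℂ A)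

lemma star_eq_pow_of_pow_eq_one {A : Type*} [CStarAlgebra A] (a : A) [IsStarNormal a]
    {d : ℕ} (hd : 1 ≤ d) (h : a ^ d = 1) : star a = a ^ (d - 1) := by
  have hspec : ∀ z ∈ spectrum ℂ a, z ^ d = 1 := by
    intro z hz
    have := spectrum.pow_image_subset (𝕜 := ℂ) a d ⟨z, hz, rfl⟩
    rw [h] at this
    exact spectrum_one_subset this
  have : star a = cfc (fun z : ℂ => star z) a := (cfc_star_id a).symm
  rw [this]
  rw [cfc_congr (g := fun z : ℂ => z ^ (d - 1)) (fun z hz => ?_)]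
  · exact cfc_pow_id a (d - 1)
  · -- star z = z ^ (d-1)
    have h1 : z ^ d = 1 := hspec z hz
    have hz0 : z ≠ 0 := by
      intro h0
      rw [h0, zero_pow (by omega)] at h1
      exact zero_ne_one h1
    have habs : ‖z‖ = 1 := by
      have h2 : ‖z‖ ^ d = 1 := by
        rw [← norm_pow, h1, norm_one]
      have h0 := norm_nonneg z
      rcases lt_trichotomy ‖z‖ 1 with h4 | h4 | h4
      · have h5 := pow_lt_one₀ h0 h4 (show d ≠ 0 by omega)
        rw [h2] at h5; exact absurd h5 (lt_irrefl 1)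
      · exact h4
      · have h5 := one_lt_pow₀ h4 (show d ≠ 0 by omega)
        rw [h2] at h5; exact absurd h5 (lt_irrefl 1)
    have hsq : (starRingEnd ℂ) z * z = 1 := by
      rw [mul_comm, Complex.mul_conj, Complex.normSq_eq_norm_sq, habs]
      norm_num
    calc star z = star z * (z * z ^ (d - 1)) := by
          rw [← pow_succ', show d - 1 + 1 = d by omega, h1, mul_one]
      _ = ((starRingEnd ℂ) z * z) * z ^ (d - 1) := by rw [← mul_assoc]; rfl
      _ = z ^ (d - 1) := by rw [hsq, one_mul]

lemma exp_ne_one_of_two_le {d : ℕ} (hd : 2 ≤ d) :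
    Complex.exp (2 * Real.pi * Complex.I / d) ≠ 1 := by
  intro h
  rw [Complex.exp_eq_one_iff] at h
  obtain ⟨n, hn⟩ := h
  have hd0 : (d : ℂ) ≠ 0 := Nat.cast_ne_zero.mpr (by omega)
  have h2 : (2 : ℂ) * Real.pi * Complex.I ≠ 0 := by
    simp [Real.pi_ne_zero, Complex.I_ne_zero]
  rw [div_eq_iff hd0] at hn
  have h4 : (1 : ℂ) = (n : ℂ) * d := by
    apply mul_left_cancel₀ h2
    linear_combination hn
  have h5 : (1 : ℤ) = n * d := by exact_mod_cast h4
  have h6 : (d : ℤ) ∣ 1 := ⟨n, by linarith⟩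
  have := Int.le_of_dvd one_pos h6
  omega


open Classical in
/-- The generating set, sanitized so that commutativity holds unconditionally. -/
noncomputable def genSet {A : Type*} [CStarAlgebra A] (s : Set A) : Set A :=
  if (∀ a ∈ s, ∀ b ∈ s, a * b = b * a ∧ a * star b = star b * a) then s else ∅

lemma genSet_comm {A : Type*} [CStarAlgebra A] (s : Set A) :
    ∀ a ∈ genSet s, ∀ b ∈ genSet s, a * b = b * a ∧ a * star b = star b * a := by
  unfold genSet
  split
  · assumption
  · simp

lemma genSet_eq {A : Type*} [CStarAlgebra A] {s : Set A}
    (h : ∀ a ∈ s, ∀ b ∈ s, a * b = b * a ∧ a * star b = star b * a) : genSet s = s :=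
  if_pos h

/-- The closed star subalgebra generated by a (sanitized) commuting family. -/
noncomputable def commClosure {A : Type*} [CStarAlgebra A] (s : Set A) : StarSubalgebra ℂ A :=
  (StarAlgebra.adjoin ℂ (genSet s)).topologicalClosure

lemma commClosure_isClosed {A : Type*} [CStarAlgebra A] (s : Set A) :
    IsClosed ((commClosure s : StarSubalgebra ℂ A) : Set A) :=
  isClosed_closure

lemma commClosure_mul_comm {A : Type*} [CStarAlgebra A] (s : Set A) :
    ∀ x y : commClosure s, x * y = y * x := by
  have h1 : ∀ a ∈ genSet s, ∀ b ∈ genSet s, a * b = b * a :=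
    fun a ha b hb => (genSet_comm s a ha b hb).1
  have h2 : ∀ a ∈ genSet s, ∀ b ∈ genSet s, a * star b = star b * a :=
    fun a ha b hb => (genSet_comm s a ha b hb).2
  exact (StarSubalgebra.commRingTopologicalClosure _
    (StarAlgebra.adjoinCommRingOfComm ℂ h1 h2).mul_comm).mul_comm

noncomputable instance commClosure.instNormedCommRing {A : Type*} [CStarAlgebra A] (s : Set A) :
    NormedCommRing (commClosure s) :=
  { SubringClass.toNormedRing (commClosure s) with
    mul_comm := commClosure_mul_comm s }

noncomputable instance commClosure.instCommCStarAlgebra {A : Type*} [CStarAlgebra A] (s : Set A) :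
    CommCStarAlgebra (commClosure s) where
  toCompleteSpace := (commClosure_isClosed s).completeSpace_coe
  norm_mul_self_le x := CStarRing.norm_star_mul_self (x := (x : A)) |>.symm.le
  mul_comm := commClosure_mul_comm s

lemma mem_commClosure {A : Type*} [CStarAlgebra A] {s : Set A}
    (h : ∀ a ∈ s, ∀ b ∈ s, a * b = b * a ∧ a * star b = star b * a) {x : A} (hx : x ∈ s) :
    x ∈ commClosure s :=
  StarSubalgebra.le_topologicalClosure _ (StarAlgebra.subset_adjoin ℂ _ (by rwa [genSet_eq h]))

theorem stmt16 (d r s m : ℕ) (hd : 1 ≤ d)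
    (ar : Fin m → ℕ)
    (Rel : (i : Fin m) → Set (Fin (ar i) → ℂ))
    (z : (i : Fin m) → Fin (ar i) → Fin (r + s))
    (R : Set (Fin r → ℂ))
    (hR : ∀ a : Fin r → ℂ, (∀ j, a j ^ d = 1) →
      (a ∈ R ↔ ∃ b : Fin s → ℂ, (∀ j, b j ^ d = 1) ∧
        ∀ i, (fun t => Fin.append a b (z i t)) ∈ Rel i))
    (PR : (i : Fin m) → MvPolynomial (Fin (ar i)) ℂ)
    (hPR : ∀ i, ∀ a : Fin (ar i) → ℂ, (∀ t, a t ^ d = 1) →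
      ((a ∈ Rel i → MvPolynomial.eval a (PR i) = 1) ∧
       (a ∉ Rel i → MvPolynomial.eval a (PR i) = Complex.exp (2 * Real.pi * Complex.I / d))))
    (P : MvPolynomial (Fin r) ℂ)
    (hP : ∀ a : Fin r → ℂ, (∀ j, a j ^ d = 1) →
      ((a ∈ R → MvPolynomial.eval a P = 1) ∧
       (a ∉ R → MvPolynomial.eval a P = Complex.exp (2 * Real.pi * Complex.I / d))))
    {H : Type*} [NormedAddCommGroup H] [InnerProductSpace ℂ H] [CompleteSpace H]
    (C : Fin (r + s) → (H →L[ℂ] H))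
    (hcomm : ∀ i j, C i * C j = C j * C i)
    (hnormal : ∀ i, C i * star (C i) = star (C i) * C i)
    (horder : ∀ i, C i ^ d = 1)
    (hsat : ∀ i, mvEval (fun t => C (z i t)) (PR i) = 1) :
    mvEval (fun j : Fin r => C (Fin.castAdd s j)) P = 1 := by
  haveI hSN : ∀ i, IsStarNormal (C i) := fun i => ⟨(hnormal i).symm⟩
  have hstar : ∀ i, star (C i) = (C i) ^ (d - 1) := fun i =>
    haveI := hSN i
    star_eq_pow_of_pow_eq_one (C i) hd (horder i)
  have hgen : ∀ a ∈ Set.range C, ∀ b ∈ Set.range C,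
      a * b = b * a ∧ a * star b = star b * a := by
    rintro _ ⟨i, rfl⟩ _ ⟨j, rfl⟩
    refine ⟨hcomm i j, ?_⟩
    rw [hstar j]
    exact (Commute.pow_right (hcomm i j) (d - 1))
  set T := commClosure (Set.range C) with hT
  have hmem : ∀ k, C k ∈ T := fun k => mem_commClosure hgen ⟨k, rfl⟩
  set Cc : Fin (r + s) → T := fun k => (⟨C k, hmem k⟩ : T) with hCc
  have hsub : ∀ (n : ℕ) (f : Fin n → Fin (r + s)) (Q : MvPolynomial (Fin n) ℂ),
      ((mvEval (fun t => Cc (f t)) Q : T) : H →L[ℂ] H) = mvEval (fun t => C (f t)) Q := by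
    intro n f Q
    have := mvEval_map (StarSubalgebra.subtype T) (fun t => Cc (f t)) Q
    simpa using this
  have hCpow : ∀ k, (Cc k) ^ d = 1 := by
    intro k
    apply Subtype.ext
    rw [SubmonoidClass.coe_pow]
    exact horder k
  have hchar : ∀ φ : WeakDual.characterSpace ℂ T,
      φ (mvEval (fun j => Cc (Fin.castAdd s j)) P) = 1 := by
    intro φ
    rw [mvEval_map φ, mvEval_eq_eval]
    set a : Fin r → ℂ := fun j => φ (Cc (Fin.castAdd s j)) with ha'
    set b : Fin s → ℂ := fun j => φ (Cc (Fin.natAdd r j)) with hb'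
    have hval : ∀ k, (φ (Cc k)) ^ d = 1 := by
      intro k
      rw [← map_pow, hCpow k, map_one]
    have ha : ∀ j, a j ^ d = 1 := fun j => hval _
    have hb : ∀ j, b j ^ d = 1 := fun j => hval _
    rcases eq_or_lt_of_le hd with hd1 | hd2
    · rcases Classical.em (a ∈ R) with hmemR | hmemR
      · exact (hP a ha).1 hmemR
      · rw [(hP a ha).2 hmemR, ← hd1]
        norm_num [Complex.exp_two_pi_mul_I]
    · have hexp := exp_ne_one_of_two_le (d := d) hd2
      have happ : Fin.append a b = fun k => φ (Cc k) := by
        funext k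
        induction k using Fin.addCases with
        | left j => rw [Fin.append_left]
        | right j => rw [Fin.append_right]
      have hmemRel : ∀ i, (fun t => Fin.append a b (z i t)) ∈ Rel i := by
        intro i
        have hlift : mvEval (fun t => Cc (z i t)) (PR i) = 1 := by
          apply Subtype.ext
          rw [hsub (ar i) (z i) (PR i)]
          exact hsat i
        have hφ : MvPolynomial.eval (fun t => φ (Cc (z i t))) (PR i) = 1 := by
          rw [← mvEval_eq_eval, ← mvEval_map φ, hlift, map_one]
        by_contra hnot
        have hbad := (hPR i (fun t => φ (Cc (z i t))) (fun t => hval _)).2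
          (by simpa [happ] using hnot)
        rw [hbad] at hφ
        exact hexp hφ
      have hmemR : a ∈ R := (hR a ha).mpr ⟨b, hb, hmemRel⟩
      exact (hP a ha).1 hmemR
  have hX : mvEval (fun j => Cc (Fin.castAdd s j)) P = 1 := by
    apply (gelfandTransform_isometry T).injective
    ext φ
    show φ (mvEval (fun j => Cc (Fin.castAdd s j)) P) = φ 1
    rw [hchar φ, map_one]
  have hfin := congrArg (Subtype.val) hX
  rw [hsub r (Fin.castAdd s) P] at hfin
  simpa using hfin
end
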